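/- Let (G, +, ν) be a complete abelian normed group (ν a norm: ν(a)=0 iff a=0, ν(-a)=ν(a), ν(a+b)≤ν(a)+ν(b)). Define a ⪯ b if there exists a sequence (a_j) in G with a_1 = a, b = ∑_j a_j (convergent in norm), and ν(b) = ∑_j ν(a_j). Then ⪯ is antisymmetric: if a ⪯ b and b ⪯ a then a = b. -/
import Mathlib


open Filter Topology

/-- A sequence `a` is a pseudo-decomposition of `b`: `b = ∑ a j` with
`ν(b) = ∑ ν(a j)`. -/
def IsPseudoDecomp {G : Type*} [NormedAddCommGroup G] (a : ℕ → G) (b : G) : Prop :=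
  HasSum a b ∧ HasSum (fun j => ‖a j‖) ‖b‖

/-- `x ⪯ b`: `x` appears as a term of some pseudo-decomposition of `b`. -/
def PseudoLE {G : Type*} [NormedAddCommGroup G] (x b : G) : Prop :=
  ∃ a : ℕ → G, IsPseudoDecomp a b ∧ ∃ j, a j = x

lemma pseudoLE_key {G : Type*} [NormedAddCommGroup G] {a b : G} (h : PseudoLE a b) :
    ‖a‖ + ‖b - a‖ ≤ ‖b‖ := by
  obtain ⟨c, ⟨hc, hn⟩, j, hj⟩ := h
  have h1 : HasSum (Function.update c j 0) (b - a) := by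
    simpa [hj, neg_add_eq_sub] using hc.update j 0
  have h2 : HasSum (Function.update (fun i => ‖c i‖) j 0) (‖b‖ - ‖a‖) := by
    simpa [hj, neg_add_eq_sub] using hn.update j 0
  have h3 : ‖b - a‖ ≤ ‖b‖ - ‖a‖ := by
    have := norm_tsum_le_tsum_norm (f := Function.update c j 0) ?_
    · rwa [h1.tsum_eq, show (fun i => ‖Function.update c j 0 i‖) = Function.update (fun i => ‖c i‖) j 0 from ?_, h2.tsum_eq] at this
      funext i
      simp [Function.update_apply, apply_ite (‖·‖)]
    · refine h2.summable.congr fun i => ?_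
      simp [Function.update_apply, apply_ite (‖·‖)]
  linarith

theorem pseudoLE_antisymm {G : Type*} [NormedAddCommGroup G] [CompleteSpace G]
    (a b : G) (hab : PseudoLE a b) (hba : PseudoLE b a) : a = b := by
  have h1 := pseudoLE_key hab
  have h2 := pseudoLE_key hba
  have h3 : ‖a - b‖ = ‖b - a‖ := norm_sub_rev a b
  have : ‖a - b‖ = 0 := by linarith [norm_nonneg (a - b)]
  exact sub_eq_zero.mp (norm_eq_zero.mp this)
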